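/- Let A be a real symmetric positive definite n×n matrix, X := {x ∈ ℝⁿ : Ax·x ≤ ℏ} and X^ℏ = {p ∈ ℝⁿ : A⁻¹p·p ≤ ℏ} its ℏ-polar dual. Let M_{A^{1/2}} be the 2n×2n block-diagonal matrix [[A^{−1/2}, 0],[0, A^{1/2}]]. Then: (a) M_{A^{1/2}} is symplectic; (b) the image M_{A^{1/2}}(B^{2n}(√ℏ)) equals the ellipsoid Q_A := {(x,p) ∈ ℝ^{2n} : Ax·x + A⁻¹p·p ≤ ℏ}; (c) Q_A ⊆ X × X^ℏ; (d) the orthogonal projection of Q_A onto the first factor ℝⁿ (the x-coordinates) equals X, and its orthogonal projection onto the second factor ℝⁿ (the p-coordinates) equals X^ℏ. -/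

import Mathlib

open Matrix Set

noncomputable section

/-- The ℏ-polar dual of a set `X ⊆ ℝⁿ`. -/
def polarDual {n : ℕ} (ℏ : ℝ) (X : Set (Fin n → ℝ)) : Set (Fin n → ℝ) :=
  {p | ∀ x ∈ X, p ⬝ᵥ x ≤ ℏ}

/-- The standard symplectic matrix `J = [[0, I],[-I, 0]]` on `ℝ²ⁿ = ℝⁿ ⊕ ℝⁿ`. -/
def J (n : ℕ) : Matrix (Fin n ⊕ Fin n) (Fin n ⊕ Fin n) ℝ :=
  Matrix.fromBlocks 0 1 (-1) 0

/-- `S ∈ Sp(n)` iff `Sᵀ J S = J`. -/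
def IsSymplectic {n : ℕ} (S : Matrix (Fin n ⊕ Fin n) (Fin n ⊕ Fin n) ℝ) : Prop :=
  Sᵀ * J n * S = J n

/-- The closed ball `B²ⁿ(√ℏ) = {z : z·z ≤ ℏ}` of radius `√ℏ` centered at `0`. -/
def ballh (n : ℕ) (ℏ : ℝ) : Set (Fin n ⊕ Fin n → ℝ) :=
  {z | z ⬝ᵥ z ≤ ℏ}

/-- The positive semidefinite square root of a positive semidefinite matrix
(removed from Mathlib; restored here with its former definition). -/
def Matrix.PosSemidef.sqrt {n : Type*} [Fintype n] [DecidableEq n]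
    {A : Matrix n n ℝ} (hA : A.PosSemidef) : Matrix n n ℝ :=
  hA.1.eigenvectorUnitary.1 * diagonal ((↑) ∘ (√·) ∘ hA.1.eigenvalues) *
    (star hA.1.eigenvectorUnitary : Matrix n n ℝ)

theorem Matrix.PosSemidef.sqrt_mul_self' {n : Type*} [Fintype n] [DecidableEq n]
    {A : Matrix n n ℝ} (hA : A.PosSemidef) : hA.sqrt * hA.sqrt = A := by
  have hU : (star hA.1.eigenvectorUnitary : Matrix n n ℝ) * hA.1.eigenvectorUnitary.1 = 1 :=
    Unitary.coe_star_mul_self _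
  conv_rhs => rw [hA.1.spectral_theorem, Unitary.conjStarAlgAut_apply]
  unfold Matrix.PosSemidef.sqrt
  rw [show ∀ a b c d e f : Matrix n n ℝ, a * b * c * (d * e * f) = a * (b * (c * d) * e) * f by
    intros; simp only [Matrix.mul_assoc], hU, Matrix.mul_one, diagonal_mul_diagonal]
  congr 3
  funext i
  simp [Real.mul_self_sqrt (hA.eigenvalues_nonneg i)]
theorem Matrix.PosSemidef.sqrt_transpose' {n : Type*} [Fintype n] [DecidableEq n]
    {A : Matrix n n ℝ} (hA : A.PosSemidef) : hA.sqrtᵀ = hA.sqrt := by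
  unfold Matrix.PosSemidef.sqrt
  rw [← conjTranspose_eq_transpose_of_trivial]
  simp [Matrix.conjTranspose_mul, Matrix.mul_assoc, Unitary.coe_star, star_eq_conjTranspose]

/-- for `X = {x : Ax·x ≤ ℏ}` (A symmetric positive definite),
`X^ℏ = {p : A⁻¹p·p ≤ ℏ}`, and `M = [[A^{-1/2},0],[0,A^{1/2}]]` (with `A^{1/2}` the
positive square root of `A`): (a) `M` is symplectic; (b) `M(B²ⁿ(√ℏ))` is the ellipsoid
`Q_A = {(x,p) : Ax·x + A⁻¹p·p ≤ ℏ}`; (c) `Q_A ⊆ X × X^ℏ`; (d) the orthogonal projections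
of `Q_A` on the `x`- and `p`-coordinates are `X` and `X^ℏ` respectively. -/
theorem john_ellipsoid_of_product_is_quantum_blob
    {n : ℕ} (ℏ : ℝ) (hℏ : 0 < ℏ)
    (A : Matrix (Fin n) (Fin n) ℝ) (hA : A.PosDef)
    (X : Set (Fin n → ℝ)) (hX : X = {x | A.mulVec x ⬝ᵥ x ≤ ℏ})
    (Xd : Set (Fin n → ℝ)) (hXd : Xd = {p | A⁻¹.mulVec p ⬝ᵥ p ≤ ℏ})
    (hXdual : Xd = polarDual ℏ X)
    (M : Matrix (Fin n ⊕ Fin n) (Fin n ⊕ Fin n) ℝ)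
    (hM : M = Matrix.fromBlocks (hA.posSemidef.sqrt)⁻¹ 0 0 hA.posSemidef.sqrt)
    (Q : Set (Fin n ⊕ Fin n → ℝ))
    (hQ : Q = {z | A.mulVec (z ∘ Sum.inl) ⬝ᵥ (z ∘ Sum.inl)
        + A⁻¹.mulVec (z ∘ Sum.inr) ⬝ᵥ (z ∘ Sum.inr) ≤ ℏ}) :
    IsSymplectic M
    ∧ (fun z => M.mulVec z) '' ballh n ℏ = Q
    ∧ Q ⊆ {z | (z ∘ Sum.inl) ∈ X ∧ (z ∘ Sum.inr) ∈ Xd}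
    ∧ {x : Fin n → ℝ | ∃ p : Fin n → ℝ, Sum.elim x p ∈ Q} = X
    ∧ {p : Fin n → ℝ | ∃ x : Fin n → ℝ, Sum.elim x p ∈ Q} = Xd := by
  set R := hA.posSemidef.sqrt with hR
  have hRR : R * R = A := hA.posSemidef.sqrt_mul_self'
  have hRherm : Rᵀ = R := hA.posSemidef.sqrt_transpose'
  have hdet : IsUnit R.det := by
    have : IsUnit A.det := hA.det_pos.ne'.isUnit
    rw [← hRR, det_mul] at this
    exact isUnit_mul_self_iff.mp this
  have hRinvR : R⁻¹ * R = 1 := nonsing_inv_mul R hdet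
  have hRRinv : R * R⁻¹ = 1 := mul_nonsing_inv R hdet
  have hAinv : A⁻¹ = R⁻¹ * R⁻¹ := by rw [← hRR, Matrix.mul_inv_rev]
  have hRinvT : (R⁻¹)ᵀ = R⁻¹ := by rw [transpose_nonsing_inv, hRherm]
  have dpnn : ∀ (v : Fin n → ℝ), 0 ≤ v ⬝ᵥ v := fun v =>
    Finset.sum_nonneg fun i _ => mul_self_nonneg _
  have key : ∀ x : Fin n → ℝ, A.mulVec x ⬝ᵥ x = (R.mulVec x) ⬝ᵥ (R.mulVec x) := by
    intro x
    rw [← hRR, ← mulVec_mulVec, dotProduct_mulVec, ← mulVec_transpose, hRherm]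
  have keyinv : ∀ p : Fin n → ℝ, A⁻¹.mulVec p ⬝ᵥ p = (R⁻¹.mulVec p) ⬝ᵥ (R⁻¹.mulVec p) := by
    intro p
    rw [hAinv, ← mulVec_mulVec, dotProduct_mulVec, ← mulVec_transpose, hRinvT]
  have hXnn : ∀ x : Fin n → ℝ, 0 ≤ A.mulVec x ⬝ᵥ x := by
    intro x; rw [key]; exact dpnn _
  have hXdnn : ∀ p : Fin n → ℝ, 0 ≤ A⁻¹.mulVec p ⬝ᵥ p := by
    intro p; rw [keyinv]; exact dpnn _
  have split : ∀ z : Fin n ⊕ Fin n → ℝ,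
      z ⬝ᵥ z = (z ∘ Sum.inl) ⬝ᵥ (z ∘ Sum.inl) + (z ∘ Sum.inr) ⬝ᵥ (z ∘ Sum.inr) := by
    intro z
    simp [dotProduct, Fintype.sum_sum_type, Function.comp]
  have hMl : ∀ w, (M.mulVec w ∘ Sum.inl) = R⁻¹.mulVec (w ∘ Sum.inl) := by
    intro w; ext i
    simp [hM, mulVec, fromBlocks, dotProduct, Fintype.sum_sum_type, Function.comp]
  have hMr : ∀ w, (M.mulVec w ∘ Sum.inr) = R.mulVec (w ∘ Sum.inr) := by
    intro w; ext i
    simp [hM, mulVec, fromBlocks, dotProduct, Fintype.sum_sum_type, Function.comp]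
  refine ⟨?_, ?_, ?_, ?_, ?_⟩
  · show Mᵀ * J n * M = J n
    rw [hM]
    show (fromBlocks R⁻¹ 0 0 R)ᵀ * fromBlocks 0 1 (-1) 0 * fromBlocks R⁻¹ 0 0 R
      = fromBlocks 0 1 (-1) 0
    rw [fromBlocks_transpose, hRinvT, hRherm, fromBlocks_multiply, fromBlocks_multiply]
    simp only [Matrix.mul_zero, Matrix.zero_mul, Matrix.mul_one, Matrix.one_mul,
      Matrix.mul_neg, Matrix.neg_mul, add_zero, zero_add, neg_zero, transpose_zero]
    rw [hRinvR, hRRinv]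
  · ext z
    constructor
    · rintro ⟨w, hw, rfl⟩
      rw [hQ]
      simp only [mem_setOf_eq, hMl, hMr, key, keyinv, mulVec_mulVec]
      rw [hRRinv, hRinvR]
      simp only [one_mulVec]
      rw [← split]
      exact hw
    · intro hz
      rw [hQ, mem_setOf_eq] at hz
      refine ⟨Sum.elim (R.mulVec (z ∘ Sum.inl)) (R⁻¹.mulVec (z ∘ Sum.inr)), ?_, ?_⟩
      · show _ ⬝ᵥ _ ≤ ℏ
        rw [split]
        simpa [key, keyinv] using hz
      · ext (i | i)
        · have := congrFun (hMl (Sum.elim (R.mulVec (z ∘ Sum.inl)) (R⁻¹.mulVec (z ∘ Sum.inr)))) i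
          simp only [Function.comp] at this ⊢
          rw [this]
          have : R⁻¹.mulVec (R.mulVec (z ∘ Sum.inl)) = z ∘ Sum.inl := by
            rw [mulVec_mulVec, hRinvR, one_mulVec]
          simpa using congrFun this i
        · have := congrFun (hMr (Sum.elim (R.mulVec (z ∘ Sum.inl)) (R⁻¹.mulVec (z ∘ Sum.inr)))) i
          simp only [Function.comp] at this ⊢
          rw [this]
          have : R.mulVec (R⁻¹.mulVec (z ∘ Sum.inr)) = z ∘ Sum.inr := by
            rw [mulVec_mulVec, hRRinv, one_mulVec]
          simpa using congrFun this i
  · rintro z hz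
    rw [hQ, mem_setOf_eq] at hz
    rw [hX, hXd]
    exact ⟨le_trans (le_add_of_nonneg_right (hXdnn _)) hz,
      le_trans (le_add_of_nonneg_left (hXnn _)) hz⟩
  · ext x
    simp only [mem_setOf_eq, hQ, hX]
    constructor
    · rintro ⟨p, hp⟩
      exact le_trans (le_add_of_nonneg_right (hXdnn _)) hp
    · intro hx
      refine ⟨0, ?_⟩
      show A.mulVec _ ⬝ᵥ _ + A⁻¹.mulVec _ ⬝ᵥ _ ≤ ℏ
      simpa using hx
  · ext p
    simp only [mem_setOf_eq, hQ, hXd]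
    constructor
    · rintro ⟨x, hx⟩
      exact le_trans (le_add_of_nonneg_left (hXnn _)) hx
    · intro hp
      refine ⟨0, ?_⟩
      show A.mulVec _ ⬝ᵥ _ + A⁻¹.mulVec _ ⬝ᵥ _ ≤ ℏ
      simpa using hp


end
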